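/- Every substitution instance of the Dummett axiom (x→y)∨(y→x), of the height-2 Peirce axiom ((x→(((y→z)→y)→y))→x)→x, and of the Umezawa axiom x∨(¬y∨(x→y)) holds at the world t under every assignment in the two-world G3 semantics. -/
import Mathlib


/-- The three Caminada labels. -/
inductive Label where
  | in_ : Label
  | out : Label
  | und : Label
deriving DecidableEq

/-- Propositional intuitionistic formulas over atoms `α`, with the
distinguished constant `nconst` (the paper's `n`). -/
inductive Form (α : Type) where
  | atom : α → Form α
  | nconst : Form α
  | top : Form α
  | bot : Form α
  | and : Form α → Form α → Form α
  | or : Form α → Form α → Form α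
  | imp : Form α → Form α → Form α
  | neg : Form α → Form α

/-- Forcing in the two-world Kripke model: world `false` is `t`, world `true`
is `s`, with `t < s` (i.e. the Bool order). `h` assigns to each atom its pair
of truth values (at `t`, at `s`). The constant `n` has value `(⊥,⊤)`. -/
def force {α : Type} (h : α → Bool × Bool) : Bool → Form α → Prop
  | w, .atom x => (if w then (h x).2 else (h x).1) = true
  | w, .nconst => w = true
  | _, .top => True
  | _, .bot => False
  | w, .and A B => force h w A ∧ force h w B
  | w, .or A B => force h w A ∨ force h w B
  | w, .imp A B => ∀ v : Bool, w ≤ v → force h v A → force h v B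
  | w, .neg A => ∀ v : Bool, w ≤ v → ¬ force h v A

/-- An assignment is legitimate when no atom gets the forbidden value `(⊤,⊥)`. -/
def Persistent {α : Type} (h : α → Bool × Bool) : Prop :=
  ∀ x, (h x).1 = true → (h x).2 = true

open Classical in
lemma force_mono {α : Type} (h : α → Bool × Bool) (hp : Persistent h) :
    ∀ A : Form α, force h false A → force h true A := by
  intro A
  induction A with
  | atom x => exact fun hx => hp x hx
  | nconst => intro _; rfl
  | top => intro _; trivial
  | bot => exact id
  | and A B ihA ihB => exact fun ⟨ha, hb⟩ => ⟨ihA ha, ihB hb⟩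
  | or A B ihA ihB => rintro (ha | hb); exacts [Or.inl (ihA ha), Or.inr (ihB hb)]
  | imp A B ihA ihB => exact fun hi v _ ha => hi v (Bool.false_le v) ha
  | neg A ih => exact fun hn v _ => hn v (Bool.false_le v)

/-- At the top world `true`, the height-2 Peirce inner formula `((B→C)→B)→B`
is forced (forcing at the final world is classical). -/
lemma peirce_top {α : Type} (B C : Form α) (h : α → Bool × Bool) :
    force h true (.imp (.imp (.imp B C) B) B) := by
  intro v hv hG
  cases v with
  | false => exact absurd hv (by decide)
  | true =>
    by_cases hB : force h true B
    · exact hB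
    · refine hG true le_rfl ?_
      intro u hu hB'
      cases u with
      | false => exact absurd hu (by decide)
      | true => exact absurd hB' hB

open Classical in
/-- Every substitution instance of the Dummett axiom `(x→y)∨(y→x)`, of the
height-2 Peirce axiom `((x→(((y→z)→y)→y))→x)→x`, and of the Umezawa axiom
`x∨(¬y∨(x→y))` holds at the world `t` under every assignment. -/
theorem stmt14 {α : Type} (A B C : Form α) (h : α → Bool × Bool) (hp : Persistent h) :
    force h false (.or (.imp A B) (.imp B A)) ∧
    force h false (.imp (.imp (.imp A (.imp (.imp (.imp B C) B) B)) A) A) ∧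
    force h false (.or A (.or (.neg B) (.imp A B))) := by
  have mono := force_mono h hp
  refine ⟨?_, ?_, ?_⟩
  · -- Dummett
    by_cases hB0 : force h false B
    · refine Or.inl ?_
      intro v _ _
      cases v with
      | false => exact hB0
      | true => exact mono B hB0
    · by_cases hA1 : force h true A
      · refine Or.inr ?_
        intro v _ hb
        cases v with
        | false => exact absurd hb hB0
        | true => exact hA1
      · refine Or.inl ?_
        intro v _ ha
        cases v with
        | false => exact absurd (mono A ha) hA1
        | true => exact absurd ha hA1
  · -- height-2 Peirce
    intro v _ hH
    cases v with
    | false =>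
      by_cases hA0 : force h false A
      · exact hA0
      · refine hH false le_rfl ?_
        intro u _ ha
        cases u with
        | false => exact absurd ha hA0
        | true => exact peirce_top B C h
    | true =>
      refine hH true le_rfl ?_
      intro u hu _
      cases u with
      | false => exact absurd hu (by decide)
      | true => exact peirce_top B C h
  · -- Umezawa
    by_cases hA0 : force h false A
    · exact Or.inl hA0
    · by_cases hB1 : force h true B
      · refine Or.inr (Or.inr ?_)
        intro v _ ha
        cases v with
        | false => exact absurd ha hA0
        | true => exact hB1
      · refine Or.inr (Or.inl ?_)
        intro v _ hb
        cases v with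
        | false => exact hB1 (mono B hb)
        | true => exact hB1 hb
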